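/- (Reduction inequality) Let F be a family of k-multisets of [n] such that the supports (sets of elements with positive multiplicity) of any two members intersect in at least t elements. For t ≤ s ≤ k let G_s be the set of supports of size s occurring among members of F. Then |F| ≤ ∑_{s=t}^{k} |G_s| · binomial(k−1, k−s). -/

import Mathlib

open Finset

lemma multiset_card_finset_sum {α β : Type*} (s : Finset α) (f : α → Multiset β) :
    (∑ i ∈ s, f i).card = ∑ i ∈ s, (f i).card :=
  map_sum (⟨⟨Multiset.card, Multiset.card_zero⟩, Multiset.card_add⟩ : Multiset β →+ ℕ) f s

lemma aux_card {n r : ℕ} (S : Finset (Fin n)) (G : Finset (Fin n → ℕ))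
    (hG : ∀ g ∈ G, (∀ i, 0 < g i → i ∈ S) ∧ ∑ i, g i = r) :
    G.card ≤ (S.card + r - 1).choose r := by
  classical
  have hcard : (Finset.univ.image
      (fun x : Sym {y // y ∈ S} r => (x : Multiset {y // y ∈ S}))).card
      = (S.card + r - 1).choose r := by
    rw [Finset.card_image_of_injective _ Sym.coe_injective, Finset.card_univ,
      Sym.card_sym_eq_choose, Fintype.card_coe]
  rw [← hcard]
  apply Finset.card_le_card_of_injOn
    (fun g => ∑ i : {y // y ∈ S}, Multiset.replicate (g i) i)
  · intro g hg
    obtain ⟨hs, hsum⟩ := hG g hg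
    simp only [Finset.mem_coe, Finset.mem_image, Finset.mem_univ, true_and]
    refine ⟨⟨_, ?_⟩, rfl⟩
    show (∑ i : {y // y ∈ S}, Multiset.replicate (g i) (i : {y // y ∈ S})).card = r
    rw [multiset_card_finset_sum]
    simp only [Multiset.card_replicate]
    rw [Finset.sum_coe_sort S (fun i => g i), ← hsum]
    exact Finset.sum_subset (Finset.subset_univ S)
      (fun i _ hi => Nat.eq_zero_of_not_pos (fun h => hi (hs i h)))
  · intro g hg g' hg' h
    obtain ⟨hs, _⟩ := hG g hg
    obtain ⟨hs', _⟩ := hG g' hg'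
    funext i
    by_cases hi : i ∈ S
    · have h2 : ∀ (g : Fin n → ℕ), Multiset.count (⟨i, hi⟩ : {y // y ∈ S})
          (∑ j : {y // y ∈ S}, Multiset.replicate (g ↑j) j) = g i := by
        intro g
        rw [Multiset.count_sum']
        rw [Finset.sum_eq_single (⟨i, hi⟩ : {y // y ∈ S})]
        · simp [Multiset.count_replicate]
        · intro b _ hb
          simp [Multiset.count_replicate, hb]
        · simp
      have := congrArg (Multiset.count (⟨i, hi⟩ : {y // y ∈ S})) h
      simp only at this
      rw [h2, h2] at this
      exact this
    · rcases Nat.eq_zero_or_pos (g i) with h0 | h0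
      · rcases Nat.eq_zero_or_pos (g' i) with h0' | h0'
        · rw [h0, h0']
        · exact absurd (hs' i h0') hi
      · exact absurd (hs i h0) hi

/-- Reduction inequality: if the supports of any two members of a family of
k-multisets intersect in at least t elements, then
`|F| ≤ ∑_{s=t}^{k} |G_s| * (k-1).choose (k-s)`, where `G_s` is the set of
supports of size `s` among members of `F`. -/
theorem reduction_inequality (n k t : ℕ) (F : Finset (Fin n → ℕ))
    (hk : ∀ m ∈ F, ∑ i, m i = k)
    (hsupp : ∀ A ∈ F, ∀ B ∈ F,
      t ≤ (Finset.univ.filter (fun i => 0 < A i ∧ 0 < B i)).card) :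
    F.card ≤ ∑ s ∈ Finset.Icc t k,
      ((F.image (fun m => Finset.univ.filter (fun i => 0 < m i))).filter
        (fun S => S.card = s)).card * (k - 1).choose (k - s) := by
  classical
  set f : (Fin n → ℕ) → Finset (Fin n) := fun m => Finset.univ.filter (fun i => 0 < m i) with hf
  have hmem : ∀ m ∈ F, f m ∈ F.image f := fun m hm => Finset.mem_image_of_mem f hm
  have hcardmem : ∀ S ∈ F.image f, S.card ∈ Finset.Icc t k := by
    intro S hS
    obtain ⟨m, hm, rfl⟩ := Finset.mem_image.mp hS
    refine Finset.mem_Icc.mpr ⟨?_, ?_⟩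
    · calc t ≤ (Finset.univ.filter (fun i => 0 < m i ∧ 0 < m i)).card := hsupp m hm m hm
        _ = (f m).card := by simp [hf]
    · calc (f m).card = ∑ _i ∈ f m, 1 := by simp
        _ ≤ ∑ i ∈ f m, m i := Finset.sum_le_sum (fun i hi => (Finset.mem_filter.mp hi).2)
        _ ≤ ∑ i, m i := Finset.sum_le_sum_of_subset (Finset.subset_univ _)
        _ = k := hk m hm
  have key : ∀ S ∈ F.image f,
      (F.filter (fun m => f m = S)).card ≤ (k - 1).choose (k - S.card) := by
    intro S hS
    have hSk : S.card ≤ k := (Finset.mem_Icc.mp (hcardmem S hS)).2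
    set φ : (Fin n → ℕ) → (Fin n → ℕ) := fun m i => m i - if i ∈ S then 1 else 0 with hφ
    have hrec : ∀ m ∈ F.filter (fun m => f m = S), ∀ i,
        m i = φ m i + if i ∈ S then 1 else 0 := by
      intro m hm i
      obtain ⟨-, hfm⟩ := Finset.mem_filter.mp hm
      by_cases hi : i ∈ S
      · have : 0 < m i := by
          have : i ∈ f m := hfm ▸ hi
          simpa [hf] using this
        simp [hφ, hi, Nat.sub_add_cancel this]
      · have : m i = 0 := by
          by_contra h0
          exact hi (hfm ▸ (by simp [hf, Nat.pos_of_ne_zero h0] : i ∈ f m))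
        simp [hφ, hi, this]
    have hinj : Set.InjOn φ (F.filter (fun m => f m = S)) := by
      intro a ha b hb hab
      funext i
      rw [hrec a ha i, hrec b hb i, hab]
    have h1 : (F.filter (fun m => f m = S)).card
        = ((F.filter (fun m => f m = S)).image φ).card :=
      (Finset.card_image_of_injOn hinj).symm
    rw [h1]
    have h2 := aux_card (r := k - S.card) S ((F.filter (fun m => f m = S)).image φ) ?_
    · have h3 : S.card + (k - S.card) - 1 = k - 1 := by omega
      rwa [h3] at h2
    · intro g hg
      obtain ⟨m, hm, rfl⟩ := Finset.mem_image.mp hg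
      obtain ⟨hmF, hfm⟩ := Finset.mem_filter.mp hm
      constructor
      · intro i hi
        have hpos : 0 < m i := lt_of_lt_of_le hi (Nat.sub_le _ _)
        exact hfm ▸ (by simp [hf, hpos] : i ∈ f m)
      · have hle : ∀ i ∈ Finset.univ, (if i ∈ S then 1 else 0) ≤ m i := by
          intro i _
          by_cases hi : i ∈ S
          · have : i ∈ f m := hfm ▸ hi
            rw [if_pos hi]; exact (by simpa [hf] using this : 0 < m i)
          · simp [hi]
        calc ∑ i, φ m i = ∑ i, m i - ∑ i, (if i ∈ S then 1 else 0) :=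
              Finset.sum_tsub_distrib Finset.univ hle
          _ = k - S.card := by
              rw [hk m hmF]
              congr 1
              simp [Finset.sum_ite_mem]
  calc F.card = ∑ S ∈ F.image f, (F.filter (fun m => f m = S)).card :=
        Finset.card_eq_sum_card_fiberwise hmem
    _ ≤ ∑ S ∈ F.image f, (k - 1).choose (k - S.card) := Finset.sum_le_sum key
    _ = ∑ s ∈ Finset.Icc t k, ∑ S ∈ (F.image f).filter (fun S => S.card = s),
          (k - 1).choose (k - S.card) :=
        (Finset.sum_fiberwise_of_maps_to hcardmem _).symm
    _ = ∑ s ∈ Finset.Icc t k,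
          ((F.image f).filter (fun S => S.card = s)).card * (k - 1).choose (k - s) := by
        refine Finset.sum_congr rfl fun s _ => ?_
        rw [Finset.sum_congr rfl (fun S hS => by
          rw [(Finset.mem_filter.mp hS).2]), Finset.sum_const, smul_eq_mul]
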